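/- Let Π be a ground HEX-program and A a complete assignment. The union of two unfounded sets of Π wrt. A need not be an unfounded set in general, but the empty set is always an unfounded set of Π wrt. A, and any subset C ⊆ U of an unfounded set U that is a cut yields another unfounded set U \ C; in particular, if U is an unfounded set and C₁, C₂ are disjoint cuts of U, then U \ (C₁ ∪ C₂) is an unfounded set of Π wrt. A. -/
import Mathlib


/-- A ground external atom: a set of input atoms and an oracle function whose
value depends only on the assignment restricted to the input atoms. -/
structure ExtAtom (Atom : Type) where
  inputs : Finset Atom
  eval : (Atom → Bool) → Bool
  dep : ∀ A B : Atom → Bool, (∀ a ∈ inputs, A a = B a) → eval A = eval B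

/-- A ground HEX-rule: head, ordinary positive body, ordinary negative body,
positive external body, negative external body. -/
structure Rule (Atom : Type) where
  head : Finset Atom
  posOrd : Finset Atom
  negOrd : Finset Atom
  posExt : List (ExtAtom Atom)
  negExt : List (ExtAtom Atom)

/-- A ground HEX-program is a set of rules (finiteness is assumed explicitly). -/
abbrev Program (Atom : Type) := Set (Rule Atom)

variable {Atom : Type} [DecidableEq Atom]

/-- The ordinary atoms occurring in a rule. -/
def Rule.atoms (r : Rule Atom) : Finset Atom :=
  r.head ∪ r.posOrd ∪ r.negOrd ∪
    ((r.posExt ++ r.negExt).foldr (fun e s => e.inputs ∪ s) ∅)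

/-- The ordinary atoms `A(Π)` occurring in a program. -/
def progAtoms (P : Program Atom) : Set Atom := ⋃ r ∈ P, (r.atoms : Set Atom)

/-- `A ∪̇¬ X`: set all atoms of `X` to false in `A`. -/
def unplug (A : Atom → Bool) (X : Finset Atom) : Atom → Bool :=
  fun a => A a && !(decide (a ∈ X))

/-- All body literals of `r` are true wrt. the complete assignment `B`. -/
def Rule.bodyTrueAt (r : Rule Atom) (B : Atom → Bool) : Prop :=
  (∀ a ∈ r.posOrd, B a = true) ∧ (∀ a ∈ r.negOrd, B a = false) ∧
  (∀ e ∈ r.posExt, e.eval B = true) ∧ (∀ e ∈ r.negExt, e.eval B = false)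

/-- Some body literal of `r` is false wrt. the complete assignment `B`. -/
def Rule.bodyFalseAt (r : Rule Atom) (B : Atom → Bool) : Prop :=
  (∃ a ∈ r.posOrd, B a = false) ∨ (∃ a ∈ r.negOrd, B a = true) ∨
  (∃ e ∈ r.posExt, e.eval B = false) ∨ (∃ e ∈ r.negExt, e.eval B = true)

/-- `X` is an unfounded set of `P` wrt. the complete assignment `A`
(Definition of unfounded sets for HEX-programs). -/
def isUnfounded (P : Program Atom) (A : Atom → Bool) (X : Finset Atom) : Prop :=
  ∀ r ∈ P, (r.head ∩ X).Nonempty →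
    r.bodyFalseAt A ∨ r.bodyFalseAt (unplug A X) ∨
    ∃ h ∈ r.head, h ∉ X ∧ A h = true

/-- `A` is a (complete) model of `P`. -/
def isModel (A : Atom → Bool) (P : Program Atom) : Prop :=
  ∀ r ∈ P, r.bodyTrueAt A → ∃ h ∈ r.head, A h = true

/-- Ordinary dependency `a → b`. -/
def ordDep (P : Program Atom) (a b : Atom) : Prop :=
  ∃ r ∈ P, a ∈ r.head ∧ b ∈ r.posOrd

/-- External dependency (e-edge) `a →ₑ b`. -/
def eDep (P : Program Atom) (a b : Atom) : Prop :=
  ∃ r ∈ P, a ∈ r.head ∧ ∃ e ∈ r.posExt ++ r.negExt, b ∈ e.inputs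

/-- The relation `→ᵈ = → ∪ →⁻¹ ∪ →ₑ`. -/
def dDep (P : Program Atom) (a b : Atom) : Prop :=
  ordDep P a b ∨ ordDep P b a ∨ eDep P a b

/-- `C` is a cut of the unfounded set `U`: `C ⊆ U`, `C` has no incoming or
internal e-edges from `U`, and there are no ordinary edges between `C` and
`U \ C` in either direction. -/
def isCut (P : Program Atom) (U C : Finset Atom) : Prop :=
  C ⊆ U ∧ (∀ a ∈ C, ∀ b ∈ U, ¬ eDep P b a) ∧
  (∀ a ∈ C, ∀ b ∈ U \ C, ¬ ordDep P a b ∧ ¬ ordDep P b a)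

/-- Some body literal of the rule corresponding to `r` in the guessing program
`Π̂` is false wrt. `B` extended to the compatible extension `Â` of `A`:
ordinary literals are evaluated at `B`, while external replacement atoms obtain
(by compatibility) the oracle value at `A`. -/
def Rule.bodyFalseHat (r : Rule Atom) (A B : Atom → Bool) : Prop :=
  (∃ a ∈ r.posOrd, B a = false) ∨ (∃ a ∈ r.negOrd, B a = true) ∨
  (∃ e ∈ r.posExt, e.eval A = false) ∨ (∃ e ∈ r.negExt, e.eval A = true)

/-- `X` (a set of ordinary atoms) is an unfounded set of the guessing program
`Π̂` wrt. the compatible extension `Â` of `A`.  Since `X` contains only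
ordinary atoms and the guessing rules have only replacement atoms in their
heads, this unfolds to the condition below, where replacement atoms keep their
(compatible) value under `Â ∪̇¬ X`. -/
def isUnfoundedHat (P : Program Atom) (A : Atom → Bool) (X : Finset Atom) : Prop :=
  ∀ r ∈ P, (r.head ∩ X).Nonempty →
    r.bodyFalseHat A A ∨ r.bodyFalseHat A (unplug A X) ∨
    ∃ h ∈ r.head, h ∉ X ∧ A h = true

/-- The set `S` contains a cycle under `→ᵈ` that uses at least one e-edge. -/
def hasECycleIn (P : Program Atom) (S : Set Atom) : Prop :=
  ∃ (n : ℕ) (c : ℕ → Atom),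
    (∀ i ≤ n, dDep P (c i) (c (i+1))) ∧ c 0 = c (n+1) ∧
    (∀ i ≤ n+1, c i ∈ S) ∧ ∃ i ≤ n, eDep P (c i) (c (i+1))

/-- `a` is a cyclic input atom: some `b` with `b →ₑ a` and a path from `a`
to `b` under `→ᵈ`. -/
def cyclicInput (P : Program Atom) (a : Atom) : Prop :=
  ∃ b, eDep P b a ∧ Relation.ReflTransGen (dDep P) a b

/-- The FLP-reduct `fΠ^A`. -/
def flpReduct (P : Program Atom) (A : Atom → Bool) : Program Atom :=
  { r ∈ P | r.bodyTrueAt A }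

/-- `A₁ ≤_Π A₂`. -/
def leP (P : Program Atom) (A₁ A₂ : Atom → Bool) : Prop :=
  ∀ a ∈ progAtoms P, A₁ a = true → A₂ a = true

/-- `A` is an answer set of `P`: a `≤_Π`-minimal model of the FLP-reduct. -/
def isAnswerSet (P : Program Atom) (A : Atom → Bool) : Prop :=
  isModel A (flpReduct P A) ∧
  ∀ A' : Atom → Bool, isModel A' (flpReduct P A) → leP P A' A → leP P A A'

/-- The dependency relation `→ ∪ →ₑ` used for strongly connected components. -/
def dep (P : Program Atom) (a b : Atom) : Prop := ordDep P a b ∨ eDep P a b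

/-- Mutual reachability under `→ ∪ →ₑ`. -/
def sameSCC (P : Program Atom) (a b : Atom) : Prop :=
  Relation.ReflTransGen (dep P) a b ∧ Relation.ReflTransGen (dep P) b a

/-- The strongly connected component of `a` under `→ ∪ →ₑ`. -/
def scc (P : Program Atom) (a : Atom) : Set Atom := { b | sameSCC P a b }

/-- The subprogram `Π_C` associated with a component `C`. -/
def subprog (P : Program Atom) (C : Set Atom) : Program Atom :=
  { r ∈ P | ∃ h ∈ r.head, h ∈ C }

/-- (1) The union of two unfounded sets need not be unfounded; (2) the empty
set is always unfounded; (3) removing a cut preserves unfoundedness; (4) in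
particular, removing the union of two disjoint cuts preserves unfoundedness. -/

def exE : ExtAtom ℕ where
  inputs := {1, 2}
  eval := fun B => B 1 == B 2
  dep := by
    intro A B h
    have h1 := h 1 (by simp)
    have h2 := h 2 (by simp)
    simp [h1, h2]

def exR1 : Rule ℕ := ⟨{1}, ∅, ∅, [exE], []⟩
def exR2 : Rule ℕ := ⟨{2}, ∅, ∅, [exE], []⟩
def exP : Program ℕ := {exR1, exR2}

theorem cut_lemma {Atom : Type} [DecidableEq Atom] (P : Program Atom) (A : Atom → Bool)
    (U C : Finset Atom) (hU : isUnfounded P A U) (hC : isCut P U C) :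
    isUnfounded P A (U \ C) := by
  obtain ⟨hsub, hE, hOrd⟩ := hC
  intro r hr hne
  obtain ⟨h0, hh0⟩ := hne
  rw [Finset.mem_inter] at hh0
  obtain ⟨hh0h, hh0X⟩ := hh0
  have hh0U : h0 ∈ U := (Finset.mem_sdiff.mp hh0X).1
  have hagree : ∀ a, a ∉ C → unplug A U a = unplug A (U \ C) a := by
    intro a ha
    simp [unplug, Finset.mem_sdiff, ha]
  rcases hU r hr ⟨h0, Finset.mem_inter.mpr ⟨hh0h, hh0U⟩⟩ with h | h | ⟨h, hh, hnot, hA⟩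
  · exact Or.inl h
  · refine Or.inr (Or.inl ?_)
    rcases h with ⟨a, haB, hfalse⟩ | ⟨a, haB, htrue⟩ | ⟨e, heB, hval⟩ | ⟨e, heB, hval⟩
    · by_cases ha : a ∈ C
      · exact absurd ⟨r, hr, hh0h, haB⟩ (hOrd a ha h0 hh0X).2
      · exact Or.inl ⟨a, haB, (hagree a ha) ▸ hfalse⟩
    · refine Or.inr (Or.inl ⟨a, haB, ?_⟩)
      simp only [unplug, Bool.and_eq_true, Bool.not_eq_true', decide_eq_false_iff_not] at htrue ⊢
      exact ⟨htrue.1, fun hx => htrue.2 (Finset.mem_sdiff.mp hx).1⟩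
    · have heq : e.eval (unplug A U) = e.eval (unplug A (U \ C)) := by
        apply e.dep
        intro b hb
        apply hagree
        intro hbC
        exact hE b hbC h0 hh0U ⟨r, hr, hh0h, e, List.mem_append_left _ heB, hb⟩
      exact Or.inr (Or.inr (Or.inl ⟨e, heB, heq ▸ hval⟩))
    · have heq : e.eval (unplug A U) = e.eval (unplug A (U \ C)) := by
        apply e.dep
        intro b hb
        apply hagree
        intro hbC
        exact hE b hbC h0 hh0U ⟨r, hr, hh0h, e, List.mem_append_right _ heB, hb⟩
      exact Or.inr (Or.inr (Or.inr ⟨e, heB, heq ▸ hval⟩))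
  · exact Or.inr (Or.inr ⟨h, hh, fun hx => hnot (Finset.mem_sdiff.mp hx).1, hA⟩)

theorem unfounded_sets_basic_properties :
    (∃ (P : Program ℕ) (A : ℕ → Bool) (U₁ U₂ : Finset ℕ),
      P.Finite ∧ ↑U₁ ⊆ progAtoms P ∧ ↑U₂ ⊆ progAtoms P ∧
      isUnfounded P A U₁ ∧ isUnfounded P A U₂ ∧
      ¬ isUnfounded P A (U₁ ∪ U₂)) ∧
    (∀ (Atom : Type) [DecidableEq Atom] (P : Program Atom) (A : Atom → Bool),
      isUnfounded P A (∅ : Finset Atom)) ∧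
    (∀ (Atom : Type) [DecidableEq Atom] (P : Program Atom) (A : Atom → Bool)
      (U C : Finset Atom), isUnfounded P A U → isCut P U C →
      isUnfounded P A (U \ C)) ∧
    (∀ (Atom : Type) [DecidableEq Atom] (P : Program Atom) (A : Atom → Bool)
      (U C₁ C₂ : Finset Atom), isUnfounded P A U →
      isCut P U C₁ → isCut P U C₂ → Disjoint C₁ C₂ →
      isUnfounded P A (U \ (C₁ ∪ C₂))) := by
  refine ⟨?_, ?_, ?_, ?_⟩
  · refine ⟨exP, fun _ => true, {1}, {2}, ?_, ?_, ?_, ?_, ?_, ?_⟩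
    · exact (Set.finite_singleton exR2).insert exR1
    · intro a ha
      simp only [Finset.coe_singleton, Set.mem_singleton_iff] at ha
      subst ha
      refine Set.mem_biUnion (show exR1 ∈ exP by simp [exP]) ?_
      simp [Rule.atoms, exR1, exE]
    · intro a ha
      simp only [Finset.coe_singleton, Set.mem_singleton_iff] at ha
      subst ha
      refine Set.mem_biUnion (show exR2 ∈ exP by simp [exP]) ?_
      simp [Rule.atoms, exR2, exE]
    · intro r hr hne
      rcases hr with hr | hr <;> subst hr
      · refine Or.inr (Or.inl (Or.inr (Or.inr (Or.inl ⟨exE, by simp [exR1], ?_⟩))))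
        simp [exE, unplug]
      · exfalso; revert hne; simp [exR2]
    · intro r hr hne
      rcases hr with hr | hr <;> subst hr
      · exfalso; revert hne; simp [exR1]
      · refine Or.inr (Or.inl (Or.inr (Or.inr (Or.inl ⟨exE, by simp [exR2], ?_⟩))))
        simp [exE, unplug]
    · intro h
      have := h exR1 (by simp [exP]) (by simp [exR1])
      rcases this with h1 | h1 | ⟨a, ha, hna, _⟩
      · rcases h1 with ⟨a, ha, _⟩ | ⟨a, ha, _⟩ | ⟨e, he, hv⟩ | ⟨e, he, _⟩
        · simp [exR1] at ha
        · simp [exR1] at ha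
        · simp [exR1] at he; subst he; simp [exE] at hv
        · simp [exR1] at he
      · rcases h1 with ⟨a, ha, _⟩ | ⟨a, ha, _⟩ | ⟨e, he, hv⟩ | ⟨e, he, _⟩
        · simp [exR1] at ha
        · simp [exR1] at ha
        · simp [exR1] at he; subst he; simp [exE, unplug] at hv
        · simp [exR1] at he
      · simp [exR1] at ha; subst ha; simp at hna
  · intro Atom _ P A r hr hne
    simp at hne
  · intro Atom _ P A U C hU hC
    exact cut_lemma P A U C hU hC
  · intro Atom _ P A U C₁ C₂ hU h1 h2 hdisj
    have step1 := cut_lemma P A U C₁ hU h1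
    obtain ⟨hsub2, hE2, hOrd2⟩ := h2
    have h2' : isCut P (U \ C₁) C₂ := by
      refine ⟨?_, ?_, ?_⟩
      · intro a ha
        exact Finset.mem_sdiff.mpr ⟨hsub2 ha, fun hc => Finset.notMem_empty a (hdisj.le_bot (by simp [Finset.mem_inter, hc, ha] : a ∈ C₁ ⊓ C₂))⟩
      · intro a ha b hb
        exact hE2 a ha b (Finset.mem_sdiff.mp hb).1
      · intro a ha b hb
        rw [Finset.mem_sdiff] at hb
        exact hOrd2 a ha b (Finset.mem_sdiff.mpr ⟨(Finset.mem_sdiff.mp hb.1).1, hb.2⟩)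
    have := cut_lemma P A (U \ C₁) C₂ step1 h2'
    have heq : U \ (C₁ ∪ C₂) = (U \ C₁) \ C₂ := by
      ext x; simp [Finset.mem_sdiff]; tauto
    rw [heq]
    exact this
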